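/- For any odd prime p and nonnegative integer j with j ≤ (p−1)/2, C((p−1)/2, j)·(−4)^j ≡ C(2j, j) (mod p). -/
import Mathlib


theorem choose_half_neg_four_pow (p : ℕ) (hp : p.Prime) (hodd : p ≠ 2)
    (j : ℕ) (hj : j ≤ (p - 1) / 2) :
    (((p - 1) / 2).choose j : ZMod p) * (-4 : ZMod p) ^ j = ((2 * j).choose j : ZMod p) := by
  induction j with
  | zero => simp
  | succ j ih =>
    have hj' : j ≤ (p - 1) / 2 := Nat.le_of_succ_le hj
    have ih := ih hj'
    set m := (p - 1) / 2 with hm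
    obtain ⟨k, hk⟩ := hp.odd_of_ne_two hodd
    have hmk : m = k := by omega
    have hp3 : 3 ≤ p := by
      rcases hp.two_le.lt_or_eq with h | h
      · omega
      · omega
    have hlt : j + 1 < p := by omega
    haveI : Fact p.Prime := ⟨hp⟩
    have hne : ((j : ZMod p) + 1) ≠ 0 := by
      have : ((j + 1 : ℕ) : ZMod p) ≠ 0 := by
        rw [Ne, ZMod.natCast_eq_zero_iff]
        intro hdvd
        exact absurd (Nat.le_of_dvd (Nat.succ_pos j) hdvd) (by omega)
      simpa using this
    -- key identities
    have key1 : (m.choose (j+1) : ZMod p) * ((j : ZMod p) + 1)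
        = (m.choose j : ZMod p) * ((m : ZMod p) - (j : ZMod p)) := by
      have h := congrArg (Nat.cast : ℕ → ZMod p) (Nat.choose_succ_right_eq m j)
      push_cast [Nat.cast_sub hj'] at h
      linear_combination h
    have key2 : ((2 * (j+1)).choose (j+1) : ZMod p) * ((j : ZMod p) + 1)
        = 2 * (2 * (j : ZMod p) + 1) * ((2 * j).choose j : ZMod p) := by
      have h := congrArg (Nat.cast : ℕ → ZMod p) (Nat.succ_mul_centralBinom_succ j)
      simp only [Nat.centralBinom] at h
      push_cast at h
      linear_combination h
    have key3 : (m : ZMod p) * 2 = -1 := by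
      have h2m : (2 * m : ℕ) = p - 1 := by omega
      have : ((2 * m : ℕ) : ZMod p) = ((p - 1 : ℕ) : ZMod p) := by rw [h2m]
      rw [Nat.cast_sub (by omega : 1 ≤ p)] at this
      push_cast at this
      simp [ZMod.natCast_self] at this
      linear_combination this
    have h4m : (-4 : ZMod p) * ((m : ZMod p) - (j : ZMod p))
        = 2 * (2 * (j : ZMod p) + 1) := by linear_combination -2 * key3
    apply mul_right_cancel₀ hne
    calc (m.choose (j+1) : ZMod p) * (-4) ^ (j+1) * ((j : ZMod p) + 1)
        = ((m.choose (j+1) : ZMod p) * ((j : ZMod p) + 1)) * ((-4:ZMod p)^j * (-4)) := by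
          rw [pow_succ]; ring
      _ = ((m.choose j : ZMod p) * ((m : ZMod p) - j)) * ((-4:ZMod p)^j * (-4)) := by
          rw [key1]
      _ = ((m.choose j : ZMod p) * (-4:ZMod p)^j) * ((-4:ZMod p) * ((m:ZMod p) - j)) := by
          ring
      _ = ((2*j).choose j : ZMod p) * (2 * (2 * (j : ZMod p) + 1)) := by rw [ih, h4m]
      _ = ((2 * (j+1)).choose (j+1) : ZMod p) * ((j : ZMod p) + 1) := by
          linear_combination -key2
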